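/- If G and H are non-trivial connected graphs with γ_r2(H) = 3, then 2γ(G) ≤ γ_r2(G ∘ H) ≤ min{ 2|A| + 3|B| : (A,B) is a dominating couple of G }. -/

import Mathlib

open Finset

def SimpleGraph.lexProd {α β : Type*} (G : SimpleGraph α) (H : SimpleGraph β) :
    SimpleGraph (α × β) where
  Adj x y := G.Adj x.1 y.1 ∨ (x.1 = y.1 ∧ H.Adj x.2 y.2)
  symm := by
    constructor
    intro x y h
    rcases h with h | ⟨e, h⟩
    · exact Or.inl h.symm
    · exact Or.inr ⟨e.symm, h.symm⟩
  loopless := by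
    constructor
    intro x h
    rcases h with h | ⟨_, h⟩
    · exact G.irrefl h
    · exact H.irrefl h

/-- `f` is a `k`-rainbow dominating function of `G`. -/
def IsRDF {α : Type*} (G : SimpleGraph α) (k : ℕ) (f : α → Finset (Fin k)) : Prop :=
  ∀ v, f v = ∅ → ∀ i : Fin k, ∃ u, G.Adj u v ∧ i ∈ f u

/-- weight of a labeling -/
def rdWeight {α : Type*} [Fintype α] {k : ℕ} (f : α → Finset (Fin k)) : ℕ :=
  ∑ v, (f v).card

/-- the `k`-rainbow domination number -/
noncomputable def rdNum {α : Type*} (G : SimpleGraph α) [Fintype α] (k : ℕ) : ℕ :=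
  sInf {n | ∃ f : α → Finset (Fin k), IsRDF G k f ∧ rdWeight f = n}

/-- `D` is a dominating set of `G` -/
def IsDom {α : Type*} (G : SimpleGraph α) (D : Set α) : Prop :=
  ∀ v, v ∈ D ∨ ∃ u ∈ D, G.Adj u v

/-- `D` is a total dominating set of `G` -/
def IsTotalDom {α : Type*} (G : SimpleGraph α) (D : Set α) : Prop :=
  ∀ v, ∃ u ∈ D, G.Adj u v

/-- the domination number -/
noncomputable def domNum {α : Type*} (G : SimpleGraph α) [Fintype α] : ℕ :=
  sInf {n | ∃ D : Finset α, IsDom G ↑D ∧ D.card = n}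

/-- the total domination number -/
noncomputable def totalDomNum {α : Type*} (G : SimpleGraph α) [Fintype α] : ℕ :=
  sInf {n | ∃ D : Finset α, IsTotalDom G ↑D ∧ D.card = n}

/-- `(A, B)` is a dominating couple of `G` -/
def IsDomCouple {α : Type*} [DecidableEq α] (G : SimpleGraph α) (A B : Finset α) : Prop :=
  Disjoint A B ∧ ∀ x, x ∉ B → ∃ w ∈ A ∪ B, G.Adj w x

-- auxiliary lemmas

lemma my_exists_adj {α : Type*} (G : SimpleGraph α) (hc : G.Connected) (hnt : Nontrivial α)
    (x : α) : ∃ w, G.Adj w x := by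
  obtain ⟨y, hy⟩ := exists_ne x
  obtain ⟨p⟩ := hc.preconnected x y
  cases p with
  | nil => exact absurd rfl hy
  | cons a _ => exact ⟨_, a.symm⟩

lemma rdf_set_nonempty {α : Type*} [Fintype α] (G : SimpleGraph α) :
    {n | ∃ f : α → Finset (Fin 2), IsRDF G 2 f ∧ rdWeight f = n}.Nonempty := by
  refine ⟨rdWeight (fun _ : α => (univ : Finset (Fin 2))), fun _ : α => univ, ?_, rfl⟩
  intro v hv
  exact absurd hv (Finset.univ_nonempty).ne_empty

lemma lower_aux {α β : Type*} [Fintype α] [Fintype β] (G : SimpleGraph α) (H : SimpleGraph β)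
    (hH : Nontrivial β) (f : α × β → Finset (Fin 2)) (hf : IsRDF (G.lexProd H) 2 f) :
    2 * domNum G ≤ rdWeight f := by
  classical
  set w : α → ℕ := fun x => ∑ h, (f (x, h)).card with hw
  have hsum : rdWeight f = ∑ x, w x := by
    rw [rdWeight, Fintype.sum_prod_type]
  set D1 : Finset α := univ.filter (fun x => 2 ≤ w x) with hD1
  set X : Fin 2 → Finset α :=
    fun c => univ.filter (fun x => w x = 1 ∧ ∃ h, f (x, h) = {c}) with hX
  have hcardle : ∀ x h, (f (x, h)).card ≤ w x := fun x h =>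
    Finset.single_le_sum (f := fun h => (f (x, h)).card) (fun _ _ => Nat.zero_le _) (mem_univ h)
  have hXmem : ∀ x (c : Fin 2), (∃ h, c ∈ f (x, h)) → w x ≤ 1 → x ∈ X c := by
    rintro x c ⟨h, hc⟩ hw1
    have h1 : 1 ≤ (f (x, h)).card := Finset.card_pos.2 ⟨c, hc⟩
    have h2 : (f (x, h)).card = 1 := le_antisymm (le_trans (hcardle x h) hw1) h1
    obtain ⟨a, ha⟩ := Finset.card_eq_one.mp h2
    have hca : c = a := by rw [ha] at hc; exact Finset.mem_singleton.mp hc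
    have h3 : 1 ≤ w x := le_trans h1 (hcardle x h)
    refine Finset.mem_filter.2 ⟨mem_univ x, by omega, h, by rw [ha, hca]⟩
  have hdom : ∀ c : Fin 2, IsDom G ↑(D1 ∪ X c) := by
    intro c x
    by_cases hx : x ∈ D1 ∪ X c
    · exact Or.inl hx
    · right
      have hw1 : w x ≤ 1 := by
        by_contra hcon
        exact hx (Finset.mem_union_left _ (Finset.mem_filter.2 ⟨mem_univ x, by omega⟩))
      have hnoc : ¬ ∃ h, c ∈ f (x, h) := fun hex =>
        hx (Finset.mem_union_right _ (hXmem x c hex hw1))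
      have hex0 : ∃ h, f (x, h) = ∅ := by
        by_contra hcon
        push_neg at hcon
        obtain ⟨b1, b2, hne⟩ := hH
        have c1 : 1 ≤ (f (x, b1)).card := Finset.card_pos.2 (hcon b1)
        have c2 : 1 ≤ (f (x, b2)).card := Finset.card_pos.2 (hcon b2)
        have hsub : ∑ h ∈ ({b1, b2} : Finset β), (f (x, h)).card ≤ w x :=
          Finset.sum_le_sum_of_subset (Finset.subset_univ _)
        rw [Finset.sum_pair hne] at hsub
        omega
      obtain ⟨h0, hh0⟩ := hex0
      obtain ⟨⟨y, hy⟩, hadj, hcy⟩ := hf (x, h0) hh0 c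
      rcases hadj with hadj | ⟨heq, _⟩
      · refine ⟨y, ?_, hadj⟩
        have hcy' : ∃ h, c ∈ f (y, h) := ⟨hy, hcy⟩
        by_cases h2y : 2 ≤ w y
        · exact Finset.mem_union_left _ (Finset.mem_filter.2 ⟨mem_univ y, h2y⟩)
        · exact Finset.mem_union_right _ (hXmem y c hcy' (by omega))
      · have heq' : y = x := heq
        rw [heq'] at hcy
        exact absurd ⟨hy, hcy⟩ hnoc
  have hdisjD : ∀ c, Disjoint D1 (X c) := by
    intro c
    rw [Finset.disjoint_left]
    intro a ha hb
    have h1 := (Finset.mem_filter.mp ha).2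
    have h2 := (Finset.mem_filter.mp hb).2.1
    omega
  have hdisj01 : Disjoint (X 0) (X 1) := by
    rw [Finset.disjoint_left]
    intro a ha hb
    obtain ⟨-, hw1, h1, hf1⟩ := Finset.mem_filter.mp ha
    obtain ⟨-, -, h2, hf2⟩ := Finset.mem_filter.mp hb
    have hne : h1 ≠ h2 := by
      intro h; rw [h, hf2] at hf1
      exact absurd (Finset.singleton_injective hf1) (by decide)
    have hsub : ∑ h ∈ ({h1, h2} : Finset β), (f (a, h)).card ≤ w a :=
      Finset.sum_le_sum_of_subset (Finset.subset_univ _)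
    rw [Finset.sum_pair hne, hf1, hf2] at hsub
    simp at hsub
    omega
  have hbound : 2 * D1.card + ((X 0).card + (X 1).card) ≤ rdWeight f := by
    rw [hsum]
    have hd2 : Disjoint (D1 ∪ X 0) (X 1) :=
      Finset.disjoint_union_left.2 ⟨hdisjD 1, hdisj01⟩
    calc 2 * D1.card + ((X 0).card + (X 1).card)
        ≤ (∑ x ∈ D1, w x) + ((∑ x ∈ X 0, w x) + (∑ x ∈ X 1, w x)) := by
          gcongr
          · have := Finset.card_nsmul_le_sum D1 w 2
              (fun x hx => (Finset.mem_filter.mp hx).2)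
            simpa [mul_comm] using this
          · have := Finset.card_nsmul_le_sum (X 0) w 1
              (fun x hx => le_of_eq (Finset.mem_filter.mp hx).2.1.symm)
            simpa using this
          · have := Finset.card_nsmul_le_sum (X 1) w 1
              (fun x hx => le_of_eq (Finset.mem_filter.mp hx).2.1.symm)
            simpa using this
      _ = ∑ x ∈ (D1 ∪ X 0) ∪ X 1, w x := by
          rw [Finset.sum_union hd2, Finset.sum_union (hdisjD 0), add_assoc]
      _ ≤ ∑ x, w x := Finset.sum_le_sum_of_subset (Finset.subset_univ _)
  have hd : ∀ c : Fin 2, domNum G ≤ D1.card + (X c).card := fun c =>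
    le_trans (Nat.sInf_le ⟨D1 ∪ X c, hdom c, rfl⟩) (Finset.card_union_le _ _)
  rcases le_total (X 0).card (X 1).card with h | h
  · have := hd 0; omega
  · have := hd 1; omega

lemma good_H_rdf {β : Type*} [Fintype β] (H : SimpleGraph β) (hHc : H.Connected)
    (hH : Nontrivial β) (hr : rdNum H 2 = 3) :
    ∃ g : β → Finset (Fin 2), IsRDF H 2 g ∧ rdWeight g ≤ 3 ∧ ∀ i : Fin 2, ∃ v, i ∈ g v := by
  classical
  obtain ⟨g, hg, hgw⟩ := Nat.sInf_mem (rdf_set_nonempty H)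
  have hgw3 : rdWeight g = 3 := by rw [hgw]; exact hr
  by_cases hcol : ∀ i : Fin 2, ∃ v, i ∈ g v
  · exact ⟨g, hg, le_of_eq hgw3, hcol⟩
  · push_neg at hcol
    obtain ⟨i, hi⟩ := hcol
    have hne : ∀ v, g v ≠ ∅ := by
      intro v hv
      obtain ⟨u, -, hiu⟩ := hg v hv i
      exact hi u hiu
    obtain ⟨x⟩ : Nonempty β := inferInstance
    obtain ⟨u, hu⟩ := my_exists_adj H hHc hH x
    have hune : u ≠ x := hu.ne
    set g' : β → Finset (Fin 2) :=
      fun z => if z = u then (univ : Finset (Fin 2)) else if z = x then ∅ else g z with hg'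
    refine ⟨g', ?_, ?_, fun i' => ⟨u, by simp [hg']⟩⟩
    · intro z hz i'
      by_cases hzu : z = u
      · rw [hg'] at hz; simp [hzu] at hz
        exact absurd hz (Finset.univ_nonempty).ne_empty
      · by_cases hzx : z = x
        · subst hzx
          exact ⟨u, hu, by simp [hg', hune]⟩
        · rw [hg'] at hz; simp [hzu, hzx] at hz
          exact absurd hz (hne z)
    · have hsplit : ∀ k : β → Finset (Fin 2),
          ∑ z ∈ (univ : Finset β) \ {u, x}, (k z).card + ∑ z ∈ ({u, x} : Finset β), (k z).card
            = rdWeight k := fun k => Finset.sum_sdiff (Finset.subset_univ _)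
      have he : ∑ z ∈ (univ : Finset β) \ {u, x}, (g' z).card
          = ∑ z ∈ (univ : Finset β) \ {u, x}, (g z).card := by
        apply Finset.sum_congr rfl
        intro z hz
        rw [Finset.mem_sdiff, Finset.mem_insert, Finset.mem_singleton] at hz
        push_neg at hz
        simp [hg', hz.2.1, hz.2.2]
      have hp' : ∑ z ∈ ({u, x} : Finset β), (g' z).card = 2 := by
        rw [Finset.sum_pair hune]
        simp [hg', hune, Ne.symm hune]
      have hp : 2 ≤ ∑ z ∈ ({u, x} : Finset β), (g z).card := by
        rw [Finset.sum_pair hune]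
        have c1 : 1 ≤ (g u).card := Finset.card_pos.2 (Finset.nonempty_iff_ne_empty.2 (hne u))
        have c2 : 1 ≤ (g x).card := Finset.card_pos.2 (Finset.nonempty_iff_ne_empty.2 (hne x))
        omega
      have h1 := hsplit g
      have h2 := hsplit g'
      omega

lemma upper_aux {α β : Type*} [Fintype α] [Fintype β] [DecidableEq α]
    (G : SimpleGraph α) (H : SimpleGraph β) (hHc : H.Connected) (hH : Nontrivial β)
    (hr : rdNum H 2 = 3) (A B : Finset α) (hAB : IsDomCouple G A B) :
    rdNum (G.lexProd H) 2 ≤ 2 * A.card + 3 * B.card := by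
  classical
  obtain ⟨g, hg, hgw, hgc⟩ := good_H_rdf H hHc hH hr
  obtain ⟨b0⟩ : Nonempty β := inferInstance
  set f : α × β → Finset (Fin 2) :=
    fun p => if p.1 ∈ A ∧ p.2 = b0 then univ else if p.1 ∈ B then g p.2 else ∅ with hfdef
  have hAnotB : ∀ x ∈ A, x ∉ B := fun x hx => Finset.disjoint_left.mp hAB.1 hx
  have hfRDF : IsRDF (G.lexProd H) 2 f := by
    rintro ⟨x, h⟩ hemp i
    by_cases hxB : x ∈ B
    · have hxA : x ∉ A := fun hxA => hAnotB x hxA hxB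
      have hgh : g h = ∅ := by simpa [hfdef, hxA, hxB] using hemp
      obtain ⟨u, hu, hiu⟩ := hg h hgh i
      exact ⟨(x, u), Or.inr ⟨rfl, hu⟩, by simp [hfdef, hxA, hxB, hiu]⟩
    · obtain ⟨w, hw, hadj⟩ := hAB.2 x hxB
      rcases Finset.mem_union.mp hw with hwA | hwB
      · exact ⟨(w, b0), Or.inl hadj, by simp [hfdef, hwA]⟩
      · have hwA : w ∉ A := fun h' => hAnotB w h' hwB
        obtain ⟨v, hv⟩ := hgc i
        exact ⟨(w, v), Or.inl hadj, by simp [hfdef, hwA, hwB, hv]⟩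
  have hweight : rdWeight f ≤ 2 * A.card + 3 * B.card := by
    rw [rdWeight, Fintype.sum_prod_type]
    calc ∑ x, ∑ h, (f (x, h)).card
        ≤ ∑ x, ((if x ∈ A then 2 else 0) + (if x ∈ B then 3 else 0)) := by
          apply Finset.sum_le_sum
          intro x _
          by_cases hxA : x ∈ A
          · have hxB := hAnotB x hxA
            have hterm : ∀ h, (f (x, h)).card = if h = b0 then 2 else 0 := by
              intro h
              by_cases hb : h = b0 <;> simp [hfdef, hxA, hxB, hb]
            rw [Finset.sum_congr rfl (fun h _ => hterm h), Finset.sum_ite_eq' univ b0 (fun _ => 2)]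
            simp [hxA, hxB]
          · by_cases hxB : x ∈ B
            · have hterm : ∀ h, (f (x, h)).card = (g h).card := by
                intro h; simp [hfdef, hxA, hxB]
              rw [Finset.sum_congr rfl (fun h _ => hterm h)]
              have : ∑ h, (g h).card = rdWeight g := rfl
              rw [this]
              simp only [hxA, hxB, if_true, if_false]
              omega
            · have hterm : ∀ h, (f (x, h)).card = 0 := by
                intro h; simp [hfdef, hxA, hxB]
              rw [Finset.sum_congr rfl (fun h _ => hterm h)]
              simp [hxA, hxB]
      _ = 2 * A.card + 3 * B.card := by
          rw [Finset.sum_add_distrib]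
          congr 1
          · rw [Finset.sum_ite_mem, Finset.univ_inter, Finset.sum_const, smul_eq_mul, mul_comm]
          · rw [Finset.sum_ite_mem, Finset.univ_inter, Finset.sum_const, smul_eq_mul, mul_comm]
  exact le_trans (Nat.sInf_le ⟨f, hfRDF, rfl⟩) hweight

theorem stmt13 {α β : Type*} [Fintype α] [Fintype β] [DecidableEq α]
    (G : SimpleGraph α) (H : SimpleGraph β)
    (hGc : G.Connected) (hHc : H.Connected) (hG : Nontrivial α) (hH : Nontrivial β)
    (hr : rdNum H 2 = 3) :
    2 * domNum G ≤ rdNum (G.lexProd H) 2 ∧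
      rdNum (G.lexProd H) 2 ≤
        sInf {n | ∃ A B : Finset α, IsDomCouple G A B ∧ n = 2 * A.card + 3 * B.card} := by
  constructor
  · obtain ⟨f, hf, hfw⟩ := Nat.sInf_mem (rdf_set_nonempty (G.lexProd H))
    have h2 : rdNum (G.lexProd H) 2 = rdWeight f := hfw.symm
    rw [h2]
    exact lower_aux G H hH f hf
  · have hSne : {n | ∃ A B : Finset α, IsDomCouple G A B ∧
        n = 2 * A.card + 3 * B.card}.Nonempty := by
      refine ⟨2 * (univ : Finset α).card + 3 * (∅ : Finset α).card, univ, ∅, ⟨?_, ?_⟩, rfl⟩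
      · exact Finset.disjoint_empty_right _
      · intro x _
        obtain ⟨w, hw⟩ := my_exists_adj G hGc hG x
        exact ⟨w, by simp, hw⟩
    obtain ⟨A, B, hAB, hn⟩ := Nat.sInf_mem hSne
    rw [hn]
    exact upper_aux G H hHc hH hr A B hAB
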